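/- Let G be a group and X ⊆ G a subset such that the family of left translates {gX : g ∈ G} has finite VC-dimension. Then the pair (int(X), ext(X)) of the interior and exterior of X (with respect to any topology on G making multiplication separately continuous, e.g. a group topology) is a tame pair: there is a maximal n for which one can find g₀,…,g_{n-1} and points (x_η : η ∈ {0,1}^n) with g_k·x_η ∈ int(X) if η(k)=0 and g_k·x_η ∈ ext(X) if η(k)=1. -/

import Mathlib

open Set Pointwise Topology

def Shatters {G : Type*} (𝓕 : Set (Set G)) (A : Finset G) : Prop :=
  ∀ B ⊆ A, ∃ S ∈ 𝓕, S ∩ (A : Set G) = (B : Set G)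

def FiniteVC {G : Type*} (𝓕 : Set (Set G)) : Prop :=
  ∃ n : ℕ, ∀ A : Finset G, A.card = n → ¬ Shatters 𝓕 A

/-- If the family of left translates of `X` has finite VC-dimension, then
`(interior X, interior Xᶜ)` is a tame pair. -/
theorem vc_set_interior_exterior_tame
    {G : Type*} [Group G] [TopologicalSpace G] [IsTopologicalGroup G]
    (X : Set G)
    (hVC : FiniteVC {S : Set G | ∃ g : G, S = g • X}) :
    ∃ N : ℕ, ∀ (n : ℕ) (g : Fin n → G) (x : (Fin n → Fin 2) → G),
      (∀ (k : Fin n) (η : Fin n → Fin 2),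
        g k * x η ∈ (if η k = 0 then interior X else interior Xᶜ)) → n ≤ N := by
  classical
  obtain ⟨m, hm⟩ := hVC
  refine ⟨2 ^ m - 1, ?_⟩
  intro n g x hgx
  by_contra hn
  push_neg at hn
  have hle : 2 ^ m ≤ n := by
    have := Nat.one_le_two_pow (n := m); omega
  have hcard : Fintype.card (Fin m → Fin 2) = 2 ^ m := by simp
  let E : (Fin m → Fin 2) ≃ Fin (2 ^ m) := Fintype.equivFinOfCardEq hcard
  let η : Fin m → Fin n → Fin 2 := fun i k =>
    if h : (k : ℕ) < 2 ^ m then E.symm ⟨k, h⟩ i else 0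
  let y : Fin m → G := fun i => x (η i)
  let K : (Fin m → Fin 2) → Fin n := fun p => Fin.castLE hle (E p)
  have hηK : ∀ (p : Fin m → Fin 2) (i : Fin m), η i (K p) = p i := by
    intro p i
    have h2 : ((K p : Fin n) : ℕ) < 2 ^ m := (E p).2
    simp only [η]
    rw [dif_pos h2]
    have : (⟨((K p : Fin n) : ℕ), h2⟩ : Fin (2 ^ m)) = E p := by
      ext; simp [K]
    rw [this, Equiv.symm_apply_apply]
  have hmem : ∀ (p : Fin m → Fin 2) (i : Fin m),
      y i ∈ (g (K p))⁻¹ • X ↔ p i = 0 := by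
    intro p i
    have h0 := hgx (K p) (η i)
    rw [hηK] at h0
    constructor
    · intro hy
      by_contra hp
      rw [if_neg hp] at h0
      have hXc : g (K p) * x (η i) ∈ Xᶜ := interior_subset h0
      have hX : g (K p) * y i ∈ X := by
        rw [mem_inv_smul_set_iff, smul_eq_mul] at hy
        exact hy
      exact hXc hX
    · intro hp
      rw [if_pos hp] at h0
      have hX : g (K p) * y i ∈ X := interior_subset h0
      rw [mem_inv_smul_set_iff, smul_eq_mul]
      exact hX
  have hinj : Function.Injective y := by
    intro i j hij
    by_contra hne
    set p : Fin m → Fin 2 := fun t => if t = i then 0 else 1 with hp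
    have h1 : y i ∈ (g (K p))⁻¹ • X := (hmem p i).2 (by simp [hp])
    have h2 : ¬ y j ∈ (g (K p))⁻¹ • X := by
      rw [hmem p j]
      simp [hp, Ne.symm hne]
    rw [hij] at h1
    exact h2 h1
  set A : Finset G := Finset.univ.image y with hA
  have hAcard : A.card = m := by
    rw [hA, Finset.card_image_of_injective _ hinj, Finset.card_univ,
      Fintype.card_fin]
  refine hm A hAcard ?_
  intro B hB
  set p : Fin m → Fin 2 := fun i => if y i ∈ B then 0 else 1 with hp
  refine ⟨(g (K p))⁻¹ • X, ⟨(g (K p))⁻¹, rfl⟩, ?_⟩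
  ext z
  simp only [Set.mem_inter_iff, Finset.coe_image, Finset.coe_univ,
    Set.image_univ, Set.mem_range, Finset.mem_coe, hA]
  constructor
  · rintro ⟨hzS, i, rfl⟩
    have := (hmem p i).1 hzS
    by_contra hzB
    simp only [hp, if_neg hzB] at this
    exact one_ne_zero this
  · intro hzB
    have hzA : z ∈ A := hB hzB
    rw [hA] at hzA
    simp only [Finset.mem_image, Finset.mem_univ, true_and] at hzA
    obtain ⟨i, rfl⟩ := hzA
    refine ⟨(hmem p i).2 ?_, i, rfl⟩
    simp [hp, hzB]
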